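/- Let X be the biquandle {1,2,3,4} with matrix M_X = [1 4 2 3 | 1 1 1 1; 2 3 1 4 | 3 3 3 3; 3 2 4 1 | 4 4 4 4; 4 1 3 2 | 2 2 2 2], let ℤ_2 = ⟨t | t²=1⟩, and let θ be the 3-cocycle given by θ(x,y,z)=t iff (x,y,z) ∈ {(1,4,1),(1,4,3),(2,4,1),(2,4,3),(3,2,1),(3,2,3),(4,2,1),(4,2,3)}, else 1. Let C be the 16-element set of quadruples {(1,1,1,1),(1,2,3,4),(1,3,4,2),(1,4,2,3),(2,1,4,3),(2,2,2,2),(2,3,1,4),(2,4,3,1),(3,1,2,4),(3,2,4,1),(3,3,3,3),(3,4,1,2),(4,1,3,2),(4,2,1,3),(4,3,2,1),(4,4,4,4)}. Then Σ_{(a,b,c,d)∈C} θ(a,a,b)·θ(a,a,c)·θ(a,a,d)·θ(a,c,a)·θ(a,d,a)·θ(a,b,a)·θ(c,a,c)^{-1}·θ(d,a,d)^{-1}·θ(b,a,b)^{-1} = 4 + 12t in the group ring ℤ[ℤ_2]. -/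

import Mathlib

/-- The operation i ▷̲ j of the order-4 non-quandle biquandle with matrix
M_X = [1 4 2 3 | 1 1 1 1; 2 3 1 4 | 3 3 3 3; 3 2 4 1 | 4 4 4 4; 4 1 3 2 | 2 2 2 2],
with elements 1,2,3,4 represented by 0,1,2,3 : Fin 4. -/
def ul4 : Fin 4 → Fin 4 → Fin 4 :=
  ![![0, 3, 1, 2], ![1, 2, 0, 3], ![2, 1, 3, 0], ![3, 0, 2, 1]]

/-- The operation i ▷̄ j of the same biquandle (it depends only on i):
1 ▷̄ j = 1, 2 ▷̄ j = 3, 3 ▷̄ j = 4, 4 ▷̄ j = 2. -/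
def ol4 : Fin 4 → Fin 4 → Fin 4 := fun i _ => ![0, 2, 3, 1] i

/-- The generator t of the multiplicative group ℤ₂ = ⟨t | t² = 1⟩. -/
def tgen : Multiplicative (ZMod 2) := Multiplicative.ofAdd 1

/-- The 3-cochain θ = χ_{(1,4,1)}χ_{(1,4,3)}χ_{(2,4,1)}χ_{(2,4,3)}χ_{(3,2,1)}
χ_{(3,2,3)}χ_{(4,2,1)}χ_{(4,2,3)} with values in ℤ₂ (elements 1,2,3,4 represented
by 0,1,2,3 : Fin 4). -/
def θ4 : Fin 4 → Fin 4 → Fin 4 → Multiplicative (ZMod 2) := fun x y z =>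
  if (x, y, z) ∈ [((0 : Fin 4), (3 : Fin 4), (0 : Fin 4)), (0, 3, 2), (1, 3, 0),
      (1, 3, 2), (2, 1, 0), (2, 1, 2), (3, 1, 0), (3, 1, 2)]
    then tgen else 1

/-- The 16 biquandle colorings of the marked graph diagram of the 3-twist-spun
trefoil (elements 1,2,3,4 represented by 0,1,2,3 : Fin 4). -/
def C16 : Finset (Fin 4 × Fin 4 × Fin 4 × Fin 4) :=
  {(0, 0, 0, 0), (0, 1, 2, 3), (0, 2, 3, 1), (0, 3, 1, 2),
   (1, 0, 3, 2), (1, 1, 1, 1), (1, 2, 0, 3), (1, 3, 2, 0),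
   (2, 0, 1, 3), (2, 1, 3, 0), (2, 2, 2, 2), (2, 3, 0, 1),
   (3, 0, 2, 1), (3, 1, 0, 2), (3, 2, 1, 0), (3, 3, 3, 3)}

/-- The Boltzman weight of a coloring (a,b,c,d). -/
def wt (p : Fin 4 × Fin 4 × Fin 4 × Fin 4) : Multiplicative (ZMod 2) :=
  match p with
  | (a, b, c, d) =>
    θ4 a a b * θ4 a a c * θ4 a a d * θ4 a c a * θ4 a d a * θ4 a b a *
      (θ4 c a c)⁻¹ * (θ4 d a d)⁻¹ * (θ4 b a b)⁻¹

/-- The biquandle cocycle invariant of the 3-twist-spun trefoil: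
Σ_{(a,b,c,d) ∈ C} weight = 4 + 12t in the group ring ℤ[ℤ₂]. -/
theorem cocycle_invariant_three_twist_spun_trefoil :
    (∑ p ∈ C16, (MonoidAlgebra.single (wt p) (1 : ℤ) :
        MonoidAlgebra ℤ (Multiplicative (ZMod 2)))) =
      MonoidAlgebra.single (1 : Multiplicative (ZMod 2)) (4 : ℤ) +
        MonoidAlgebra.single tgen (12 : ℤ) := by
  rw [show C16 = {(0, 0, 0, 0), (0, 1, 2, 3), (0, 2, 3, 1), (0, 3, 1, 2),
   (1, 0, 3, 2), (1, 1, 1, 1), (1, 2, 0, 3), (1, 3, 2, 0),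
   (2, 0, 1, 3), (2, 1, 3, 0), (2, 2, 2, 2), (2, 3, 0, 1),
   (3, 0, 2, 1), (3, 1, 0, 2), (3, 2, 1, 0), (3, 3, 3, 3)} from rfl]
  have h0 : wt (0, 0, 0, 0) = 1 := by decide
  have h1 : wt (0, 1, 2, 3) = tgen := by decide
  have h2 : wt (0, 2, 3, 1) = tgen := by decide
  have h3 : wt (0, 3, 1, 2) = tgen := by decide
  have h4 : wt (1, 0, 3, 2) = tgen := by decide
  have h5 : wt (1, 1, 1, 1) = 1 := by decide
  have h6 : wt (1, 2, 0, 3) = tgen := by decide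
  have h7 : wt (1, 3, 2, 0) = tgen := by decide
  have h8 : wt (2, 0, 1, 3) = tgen := by decide
  have h9 : wt (2, 1, 3, 0) = tgen := by decide
  have h10 : wt (2, 2, 2, 2) = 1 := by decide
  have h11 : wt (2, 3, 0, 1) = tgen := by decide
  have h12 : wt (3, 0, 2, 1) = tgen := by decide
  have h13 : wt (3, 1, 0, 2) = tgen := by decide
  have h14 : wt (3, 2, 1, 0) = tgen := by decide
  have h15 : wt (3, 3, 3, 3) = 1 := by decide
  rw [Finset.sum_insert (by decide), Finset.sum_insert (by decide),
    Finset.sum_insert (by decide), Finset.sum_insert (by decide),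
    Finset.sum_insert (by decide), Finset.sum_insert (by decide),
    Finset.sum_insert (by decide), Finset.sum_insert (by decide),
    Finset.sum_insert (by decide), Finset.sum_insert (by decide),
    Finset.sum_insert (by decide), Finset.sum_insert (by decide),
    Finset.sum_insert (by decide), Finset.sum_insert (by decide),
    Finset.sum_insert (by decide), Finset.sum_singleton,
    h0, h1, h2, h3, h4, h5, h6, h7, h8, h9, h10, h11, h12, h13, h14, h15]
  have e4 : (MonoidAlgebra.single (1 : Multiplicative (ZMod 2)) (4 : ℤ) :
      MonoidAlgebra ℤ (Multiplicative (ZMod 2))) = (4 : ℤ) • MonoidAlgebra.single 1 1 := by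
    rw [MonoidAlgebra.smul_single']; norm_num
  have e12 : (MonoidAlgebra.single tgen (12 : ℤ) :
      MonoidAlgebra ℤ (Multiplicative (ZMod 2))) = (12 : ℤ) • MonoidAlgebra.single tgen 1 := by
    rw [MonoidAlgebra.smul_single']; norm_num
  rw [e4, e12]
  abel
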